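/- If for every object X of 𝓒 there exists an element z of the abelian group P(F(X))(X) such that the component at X of the counit ε_{Y(X)} : P(F(X)) ⟶ Y(X) sends z to the identity morphism 𝟙_X ∈ 𝓒(X, X), then the Freyd functor F : 𝓒 ⥤ 𝓟𝓑 is faithful. -/

import Mathlib

open CategoryTheory Opposite

universe v u

variable (B C : Type u) [Category.{v} B] [Category.{v} C] [Preadditive B] [Preadditive C]

/-- The category of additive presheaves (of abelian groups) on a preadditive category. -/
noncomputable abbrev AddPresheaf (D : Type u) [Category.{v} D] [Preadditive D] :=
  Dᵒᵖ ⥤+ AddCommGrpCat.{v}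

/-- The restriction functor `U : 𝓟𝓒 ⥤ 𝓟𝓑` given by precomposition with `ιᵒᵖ`. -/
noncomputable def restrictU (ι : B ⥤ C) [ι.Additive] :
    AddPresheaf C ⥤ AddPresheaf B where
  obj G := ⟨ι.op ⋙ G.1, letI := G.2; (inferInstance : (ι.op ⋙ G.1).Additive)⟩
  map α := ObjectProperty.homMk (Functor.whiskerLeft ι.op α.hom)

/-- The additive Yoneda embedding `Y : 𝓒 ⥤ 𝓟𝓒`, `Y(X) = 𝓒(−, X)`. -/
noncomputable def yonedaAdd : C ⥤ AddPresheaf C where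
  obj X := ⟨preadditiveYoneda.obj X, (inferInstance : (preadditiveYoneda.obj X).Additive)⟩
  map f := ObjectProperty.homMk (preadditiveYoneda.map f)

/-- The Freyd functor `F = Y ⋙ U : 𝓒 ⥤ 𝓟𝓑`, `F(X) = 𝓒(ι(−), X)`. -/
noncomputable def freydF (ι : B ⥤ C) [ι.Additive] : C ⥤ AddPresheaf B :=
  yonedaAdd C ⋙ restrictU B C ι
/-- if for every object `X` of `𝓒` the identity map of `X` is in the image of
the component at `X` of the counit `ε_{Y(X)} : P(F(X)) ⟶ Y(X)`, then the Freyd functor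
`F : 𝓒 ⥤ 𝓟𝓑` is faithful. -/
theorem freyd_faithful_of_id_in_image (ι : B ⥤ C) [ι.Additive] [ι.Full] [ι.Faithful]
    (P : AddPresheaf B ⥤ AddPresheaf C) (adj : P ⊣ restrictU B C ι)
    (hε : ∀ X : C, ∃ z : (P.obj ((freydF B C ι).obj X)).1.obj (op X),
      (adj.counit.app ((yonedaAdd C).obj X)).hom.app (op X) z = 𝟙 X) :
    (freydF B C ι).Faithful := by
  constructor
  intro X Y f g h
  obtain ⟨z, hz⟩ := hε X
  have key : ∀ u : X ⟶ Y,
      u = (adj.counit.app ((yonedaAdd C).obj Y)).hom.app (op X)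
            ((P.map ((freydF B C ι).map u)).hom.app (op X) z) := by
    intro u
    have nat := adj.counit.naturality ((yonedaAdd C).map u)
    have this : ((yonedaAdd C).map u).hom.app (op X)
        ((adj.counit.app ((yonedaAdd C).obj X)).hom.app (op X) z)
        = (adj.counit.app ((yonedaAdd C).obj Y)).hom.app (op X)
            ((P.map ((freydF B C ι).map u)).hom.app (op X) z) :=
      (congrArg (fun (α : P.obj ((freydF B C ι).obj X) ⟶ (yonedaAdd C).obj Y)
        => α.hom.app (op X) z) nat).symm
    rw [hz] at this
    rw [show ((yonedaAdd C).map u).hom.app (op X) (𝟙 X) = 𝟙 X ≫ u from rfl, Category.id_comp] at this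
    exact this
  rw [key f, key g, h]
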